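/- Let P be a probability measure on ℝ and define p(x) = P([x−1, x+1]). Then the set {x : p(−x) < 2·p(x)} has positive P-measure. -/

import Mathlib

open MeasureTheory Set Filter Topology

lemma aux_inter (a : ℝ) :
    (⋂ n : ℕ, Set.Icc (a - 1/(n+1)) (a + 1 + 1/(n+1))) = Set.Icc a (a + 1) := by
  ext y
  simp only [Set.mem_iInter, Set.mem_Icc]
  constructor
  · intro h
    constructor
    · by_contra hy
      push_neg at hy
      obtain ⟨n, hn⟩ := exists_nat_one_div_lt (by linarith : (0:ℝ) < a - y)
      linarith [(h n).1]
    · by_contra hy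
      push_neg at hy
      obtain ⟨n, hn⟩ := exists_nat_one_div_lt (by linarith : (0:ℝ) < y - (a+1))
      linarith [(h n).2]
  · intro h n
    have : (0:ℝ) < 1/(n+1) := by positivity
    constructor <;> linarith [h.1, h.2]

lemma aux_key (P : Measure ℝ) [IsFiniteMeasure P] (a : ℝ) (c : ENNReal)
    (h : ∀ γ : ℝ, 0 < γ → c ≤ P (Set.Icc (a - γ) (a + 1 + γ))) :
    c ≤ P (Set.Icc a (a + 1)) := by
  have hm : Antitone (fun n : ℕ => Set.Icc (a - 1/(n+1)) (a + 1 + 1/(n+1))) := by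
    intro m n hmn
    have h1 : (1:ℝ)/(n+1) ≤ 1/(m+1) := by
      apply one_div_le_one_div_of_le (by positivity)
      have : (m:ℝ) ≤ n := Nat.cast_le.mpr hmn
      linarith
    exact Set.Icc_subset_Icc (by linarith) (by linarith)
  have hT := tendsto_measure_iInter_atTop (μ := P)
    (fun n => measurableSet_Icc.nullMeasurableSet) hm ⟨0, measure_ne_top _ _⟩
  rw [aux_inter] at hT
  exact ge_of_tendsto' hT (fun n => h _ (by positivity))




lemma aux_box (P : Measure ℝ) [IsProbabilityMeasure P] {ν : ENNReal} (hν : 0 < ν) :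
    ∃ N : ℕ, P (Set.Icc (-(N:ℝ)) N)ᶜ < ν := by
  have hm : Antitone (fun n : ℕ => (Set.Icc (-(n:ℝ)) n)ᶜ) := by
    intro m n hmn
    apply Set.compl_subset_compl.mpr
    have : (m:ℝ) ≤ n := Nat.cast_le.mpr hmn
    exact Set.Icc_subset_Icc (by linarith) this
  have hT := tendsto_measure_iInter_atTop (μ := P)
    (fun n => measurableSet_Icc.compl.nullMeasurableSet) hm ⟨0, measure_ne_top _ _⟩
  have hempty : (⋂ n : ℕ, (Set.Icc (-(n:ℝ)) n)ᶜ) = ∅ := by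
    ext x
    simp only [Set.mem_iInter, Set.mem_compl_iff, Set.mem_Icc, Set.mem_empty_iff_false,
      iff_false, not_forall, not_not]
    obtain ⟨n, hn⟩ := exists_nat_ge |x|
    exact ⟨n, (abs_le.mp hn).1, (abs_le.mp hn).2⟩
  rw [hempty] at hT
  simp only [measure_empty] at hT
  exact (hT.eventually (Iio_mem_nhds hν)).exists

lemma aux_attain (P : Measure ℝ) [IsProbabilityMeasure P]
    (hν : 0 < ⨆ a : ℝ, P (Set.Icc a (a+1))) :
    ∃ a : ℝ, (⨆ a : ℝ, P (Set.Icc a (a+1))) ≤ P (Set.Icc a (a+1)) := by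
  set ν := ⨆ a : ℝ, P (Set.Icc a (a+1)) with hνdef
  have hνtop : ν ≠ ⊤ := by
    have : ν ≤ 1 := iSup_le fun a => prob_le_one
    exact (this.trans_lt (by norm_num)).ne
  obtain ⟨N, hN⟩ := aux_box P hν
  set c₀ := P (Set.Icc (-(N:ℝ)) N)ᶜ with hc₀def
  have hout : ∀ a : ℝ, a ∉ Set.Icc (-(N:ℝ)-1) (N:ℝ) → P (Set.Icc a (a+1)) ≤ c₀ := by
    intro a ha
    rw [Set.mem_Icc] at ha
    push_neg at ha
    have ha' : (N:ℝ) < a ∨ a + 1 < -(N:ℝ) := by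
      rcases le_or_gt (-(N:ℝ)-1) a with h | h
      · exact Or.inl (ha h)
      · exact Or.inr (by linarith)
    apply measure_mono
    intro y hy
    rw [Set.mem_Icc] at hy
    rw [Set.mem_compl_iff, Set.mem_Icc]
    intro hcon
    rcases ha' with h | h
    · linarith [hcon.2, hy.1]
    · linarith [hcon.1, hy.2]
  have hseq : ∀ n : ℕ, ∃ b : ℝ, max c₀ (ν - ((n:ENNReal)+1)⁻¹) < P (Set.Icc b (b+1)) := by
    intro n
    have hlt : max c₀ (ν - ((n:ENNReal)+1)⁻¹) < ν := by
      apply max_lt hN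
      apply ENNReal.sub_lt_self hνtop hν.ne'
      simp [ENNReal.inv_ne_zero]
    exact lt_iSup_iff.mp hlt
  choose s hs using hseq
  have hmem : ∀ n, s n ∈ Set.Icc (-(N:ℝ)-1) (N:ℝ) := by
    intro n
    by_contra h
    exact absurd ((hs n).trans_le (hout _ h)) (not_lt.mpr (le_max_left _ _))
  obtain ⟨a, -, φ, hφ, hlim⟩ := isCompact_Icc.tendsto_subseq hmem
  refine ⟨a, aux_key P a ν ?_⟩
  intro γ hγ
  apply ENNReal.le_of_forall_pos_le_add
  intro ε hε _
  obtain ⟨m, hm⟩ := ENNReal.exists_inv_nat_lt (by exact_mod_cast hε.ne' : (ε:ENNReal) ≠ 0)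
  obtain ⟨M, hM⟩ := Metric.tendsto_atTop.mp hlim γ hγ
  set n := max m M with hn
  have h1 : dist (s (φ n)) a < γ := hM n (le_max_right _ _)
  have habs := abs_lt.mp (by rwa [Real.dist_eq] at h1)
  have hsub : Set.Icc (s (φ n)) (s (φ n) + 1) ⊆ Set.Icc (a - γ) (a + 1 + γ) :=
    Set.Icc_subset_Icc (by linarith [habs.1]) (by linarith [habs.2])
  have h2 : ν - ((φ n : ENNReal)+1)⁻¹ ≤ P (Set.Icc (s (φ n)) (s (φ n)+1)) :=
    le_of_lt (lt_of_le_of_lt (le_max_right _ _) (hs (φ n)))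
  have h3 : ν ≤ P (Set.Icc (s (φ n)) (s (φ n)+1)) + ((φ n : ENNReal)+1)⁻¹ :=
    tsub_le_iff_right.mp h2
  have h4 : ((φ n : ENNReal)+1)⁻¹ ≤ (m:ENNReal)⁻¹ := by
    apply ENNReal.inv_le_inv.mpr
    have : m ≤ φ n := le_trans (le_max_left _ _) (hφ.le_apply)
    have : (m:ENNReal) ≤ (φ n : ENNReal) := by exact_mod_cast this
    exact this.trans (le_add_of_nonneg_right zero_le)
  calc ν ≤ P (Set.Icc (s (φ n)) (s (φ n)+1)) + ((φ n : ENNReal)+1)⁻¹ := h3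
    _ ≤ P (Set.Icc (a - γ) (a + 1 + γ)) + (ε:ENNReal) :=
        add_le_add (measure_mono hsub) (h4.trans hm.le)
theorem stmt_1 (P : Measure ℝ) [IsProbabilityMeasure P]
    (p : ℝ → ENNReal) (hp : ∀ x, p x = P (Set.Icc (x - 1) (x + 1))) :
    0 < P {x | p (-x) < 2 * p x} := by
  by_contra hcon
  push_neg at hcon
  have hE : P {x | p (-x) < 2 * p x} = 0 := le_antisymm hcon zero_le
  set E := {x : ℝ | p (-x) < 2 * p x} with hEdef
  have hnotE : ∀ x : ℝ, x ∉ E → 2 * p x ≤ p (-x) := fun x hx => not_lt.mp hx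
  set ν := ⨆ a : ℝ, P (Set.Icc a (a+1)) with hνdef
  have hfν : ∀ a : ℝ, P (Set.Icc a (a+1)) ≤ ν := fun a =>
    le_iSup (fun a : ℝ => P (Set.Icc a (a+1))) a
  have hνtop : ν ≠ ⊤ := by
    have : ν ≤ 1 := iSup_le fun a => prob_le_one
    exact (this.trans_lt (by norm_num)).ne
  have hνpos : 0 < ν := by
    rw [pos_iff_ne_zero]
    intro h0
    have hall : ∀ a : ℝ, P (Set.Icc a (a+1)) = 0 := fun a =>
      le_antisymm (le_trans (hfν a) (le_of_eq h0)) zero_le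
    have hcover : (Set.univ : Set ℝ) ⊆ ⋃ n : ℤ, Set.Icc (n:ℝ) (n+1) := by
      intro x _
      exact Set.mem_iUnion.mpr ⟨⌊x⌋, ⟨Int.floor_le x, (Int.lt_floor_add_one x).le⟩⟩
    have h2 : P Set.univ ≤ ∑' n : ℤ, P (Set.Icc (n:ℝ) (n+1)) :=
      le_trans (measure_mono hcover) (measure_iUnion_le _)
    rw [measure_univ] at h2
    simp [hall] at h2
  have hwin : ∀ x : ℝ, P (Set.Icc (x-1) (x+1)) ≤
      P (Set.Icc (x-1) ((x-1)+1)) + P (Set.Icc x (x+1)) := by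
    intro x
    have hsub : Set.Icc (x-1) (x+1) ⊆ Set.Icc (x-1) ((x-1)+1) ∪ Set.Icc x (x+1) := by
      intro y hy
      rcases le_total y x with h | h
      · exact Or.inl ⟨hy.1, by linarith⟩
      · exact Or.inr ⟨h, hy.2⟩
    exact (measure_mono hsub).trans (measure_union_le _ _)
  have hlow : ∀ a : ℝ, ∀ x ∈ Set.Icc a (a+1), P (Set.Icc a (a+1)) ≤ p x := by
    intro a x hx
    rw [hp x]
    exact measure_mono (Set.Icc_subset_Icc (by linarith [hx.2]) (by linarith [hx.1]))
  obtain ⟨a₀, ha₀⟩ := aux_attain P hνpos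
  set B := {a : ℝ | ν ≤ P (Set.Icc a (a+1))} with hBdef
  have hBne : B.Nonempty := ⟨a₀, ha₀⟩
  obtain ⟨N, hN⟩ := aux_box P hνpos
  have hBbd : ∀ a ∈ B, a ∈ Set.Icc (-(N:ℝ)-1) (N:ℝ) := by
    intro a ha
    by_contra hout
    rw [Set.mem_Icc] at hout
    push_neg at hout
    have ha' : (N:ℝ) < a ∨ a + 1 < -(N:ℝ) := by
      rcases le_or_gt (-(N:ℝ)-1) a with h | h
      · exact Or.inl (hout h)
      · exact Or.inr (by linarith)
    have hsub : Set.Icc a (a+1) ⊆ (Set.Icc (-(N:ℝ)) N)ᶜ := by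
      intro y hy
      rw [Set.mem_Icc] at hy
      rw [Set.mem_compl_iff, Set.mem_Icc]
      intro hcon2
      rcases ha' with h | h
      · linarith [hcon2.2, hy.1]
      · linarith [hcon2.1, hy.2]
    exact absurd (lt_of_le_of_lt (le_trans ha (measure_mono hsub)) hN) (lt_irrefl ν)
  have hBdda : BddAbove B := ⟨(N:ℝ), fun a ha => (hBbd a ha).2⟩
  have hBddb : BddBelow B := ⟨-(N:ℝ)-1, fun a ha => (hBbd a ha).1⟩
  set t := sSup B with htdef
  set u := sInf B with hudef
  have htB : t ∈ B := by
    show ν ≤ P (Set.Icc t (t+1))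
    apply aux_key P t ν
    intro γ hγ
    obtain ⟨b, hbB, hbγ⟩ := exists_lt_of_lt_csSup hBne (by linarith : t - γ < t)
    have hble : b ≤ t := le_csSup hBdda hbB
    calc ν ≤ P (Set.Icc b (b+1)) := hbB
      _ ≤ P (Set.Icc (t - γ) (t + 1 + γ)) :=
        measure_mono (Set.Icc_subset_Icc (le_of_lt hbγ) (by linarith))
  have huB : u ∈ B := by
    show ν ≤ P (Set.Icc u (u+1))
    apply aux_key P u ν
    intro γ hγ
    obtain ⟨b, hbB, hbγ⟩ := exists_lt_of_csInf_lt hBne (by linarith : u < u + γ)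
    have hble : u ≤ b := csInf_le hBddb hbB
    calc ν ≤ P (Set.Icc b (b+1)) := hbB
      _ ≤ P (Set.Icc (u - γ) (u + 1 + γ)) :=
        measure_mono (Set.Icc_subset_Icc (by linarith) (by linarith))
  have hwitness : ∀ a ∈ B, ∃ x, x ∈ Set.Icc a (a+1) ∧ x ∉ E := by
    intro a ha
    have h1 : ν ≤ P (Set.Icc a (a+1) \ E) := by
      calc ν ≤ P (Set.Icc a (a+1)) := ha
        _ ≤ P ((Set.Icc a (a+1) \ E) ∪ E) := measure_mono (fun y hy => by
            by_cases hyE : y ∈ E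
            · exact Or.inr hyE
            · exact Or.inl ⟨hy, hyE⟩)
        _ ≤ P (Set.Icc a (a+1) \ E) + P E := measure_union_le _ _
        _ = P (Set.Icc a (a+1) \ E) := by rw [hE, add_zero]
    have hne : P (Set.Icc a (a+1) \ E) ≠ 0 := by
      intro h
      rw [h] at h1
      exact absurd (le_antisymm h1 zero_le) hνpos.ne'
    obtain ⟨x, hx⟩ := nonempty_of_measure_ne_zero hne
    exact ⟨x, hx.1, hx.2⟩
  have hspawn : ∀ a ∈ B, ∀ x ∈ Set.Icc a (a+1), x ∉ E →
      ((-x-1) ∈ B ∧ (-x) ∈ B) := by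
    intro a ha x hx hxE
    have hpx : ν ≤ p x := le_trans ha (hlow a x hx)
    have h2 : ν + ν ≤ p (-x) := by
      calc ν + ν ≤ p x + p x := add_le_add hpx hpx
        _ = 2 * p x := (two_mul _).symm
        _ ≤ p (-x) := hnotE x hxE
    have h3 : p (-x) ≤ P (Set.Icc (-x-1) ((-x-1)+1)) + P (Set.Icc (-x) (-x+1)) := by
      rw [hp (-x)]
      exact hwin (-x)
    have h4 : ν + ν ≤ P (Set.Icc (-x-1) ((-x-1)+1)) + P (Set.Icc (-x) (-x+1)) :=
      h2.trans h3
    constructor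
    · show ν ≤ P (Set.Icc (-x-1) ((-x-1)+1))
      have h5 : ν + ν ≤ P (Set.Icc (-x-1) ((-x-1)+1)) + ν :=
        h4.trans (add_le_add_right (hfν _) _)
      exact (ENNReal.add_le_add_iff_right hνtop).mp h5
    · show ν ≤ P (Set.Icc (-x) (-x+1))
      have h5 : ν + ν ≤ ν + P (Set.Icc (-x) (-x+1)) := by
        refine h4.trans (add_le_add_left ?_ _)
        exact hfν (-x-1)
      exact (ENNReal.add_le_add_iff_left hνtop).mp h5
  have hxbound : ∀ a ∈ B, ∀ x ∈ Set.Icc a (a+1), x ∉ E → (-t ≤ x ∧ x ≤ -u-1) := by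
    intro a ha x hx hxE
    obtain ⟨h1, h2⟩ := hspawn a ha x hx hxE
    constructor
    · have : -x ≤ t := le_csSup hBdda h2
      linarith
    · have : u ≤ -x-1 := csInf_le hBddb h1
      linarith
  obtain ⟨x₁, hx₁, hx₁E⟩ := hwitness t htB
  have hstep1 : u ≤ -t - 1 := by
    have hb := (hxbound t htB x₁ hx₁ hx₁E).2
    have := hx₁.1
    linarith
  obtain ⟨y₁, hy₁, hy₁E⟩ := hwitness u huB
  have hut : u = -t - 1 := by
    have hb := (hxbound u huB y₁ hy₁ hy₁E).1
    have := hy₁.2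
    linarith
  have hyall : ∀ y ∈ Set.Icc u (u+1), y ∉ E → y = u + 1 := by
    intro y hy hyE
    have hb := (hxbound u huB y hy hyE).1
    have := hy.2
    linarith
  have hxall : ∀ x ∈ Set.Icc t (t+1), x ∉ E → x = t := by
    intro x hx hxE
    have hb := (hxbound t htB x hx hxE).2
    have := hx.1
    linarith
  have hatom : ∀ (a z : ℝ), a ∈ B → (∀ y ∈ Set.Icc a (a+1), y ∉ E → y = z) →
      ν ≤ P {z} := by
    intro a z ha hall
    calc ν ≤ P (Set.Icc a (a+1)) := ha
      _ ≤ P ({z} ∪ E) := measure_mono (fun y hy => by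
          by_cases hyE : y ∈ E
          · exact Or.inr hyE
          · exact Or.inl (by rw [Set.mem_singleton_iff]; exact hall y hy hyE))
      _ ≤ P {z} + P E := measure_union_le _ _
      _ = P {z} := by rw [hE, add_zero]
  have hatom_t : ν ≤ P {t} := hatom t t htB hxall
  have hatom_mt : ν ≤ P {(-t : ℝ)} := by
    have h := hatom u (u+1) huB hyall
    rwa [show u + 1 = -t by linarith] at h
  have hnot : ∀ z : ℝ, ν ≤ P {z} → z ∉ E := by
    intro z hz hzE
    have h1 : P {z} ≤ P E := measure_mono (Set.singleton_subset_iff.mpr hzE)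
    rw [hE] at h1
    exact absurd (le_antisymm (le_trans hz h1) zero_le) hνpos.ne'
  have htE := hnot t hatom_t
  have hmtE := hnot (-t) hatom_mt
  have hsing : P {t} ≤ p t := by
    rw [hp t]
    exact measure_mono (Set.singleton_subset_iff.mpr ⟨by linarith, by linarith⟩)
  have hc1 : 2 * ν ≤ p (-t) := by
    calc 2 * ν ≤ 2 * P {t} := mul_le_mul_right hatom_t 2
      _ ≤ 2 * p t := mul_le_mul_right hsing 2
      _ ≤ p (-t) := hnotE t htE
  have hc2 : p (-t) ≤ ν := by
    have h1 : 2 * p (-t) ≤ p t := by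
      have h := hnotE (-t) hmtE
      rwa [neg_neg] at h
    have h2 : p t ≤ P (Set.Icc (t-1) ((t-1)+1)) + P (Set.Icc t (t+1)) := by
      rw [hp t]; exact hwin t
    have h3 : 2 * p (-t) ≤ 2 * ν := by
      calc 2 * p (-t) ≤ p t := h1
        _ ≤ P (Set.Icc (t-1) ((t-1)+1)) + P (Set.Icc t (t+1)) := h2
        _ ≤ ν + ν := add_le_add (hfν _) (hfν _)
        _ = 2 * ν := (two_mul _).symm
    exact (ENNReal.mul_le_mul_iff_right two_ne_zero (by norm_num)).mp h3
  have hfin : ν + ν ≤ ν + 0 := by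
    have := hc1.trans hc2
    rw [two_mul] at this
    simpa using this
  exact absurd ((ENNReal.add_le_add_iff_left hνtop).mp hfin)
    (by simpa using hνpos.ne')
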